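/- Let n ≥ 2, x ∈ 𝔹ⁿ, and t > 0 with t(1−|x|) < 1. Then B_ρ(x, r) ⊂ B_c(x, t) ⊂ B_ρ(x, R), where r = log(1 + t(1−|x|)/(1 + t(1−|x|))) and R = 2t(1−|x|)/(1 − t(1−|x|)). -/

import Mathlib

set_option maxHeartbeats 800000

open Metric Set

/-- Euclidean `n`-space. -/
abbrev E (n : ℕ) := EuclideanSpace ℝ (Fin n)

/-- The Cassinian metric of a domain `D`:
`c_D(x,y) = sup_{p ∈ ∂D} |x-y| / (|x-p| |p-y|)`. -/
noncomputable def cassinian {n : ℕ} (D : Set (E n)) (x y : E n) : ℝ :=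
  ⨆ p ∈ frontier D, dist x y / (dist x p * dist p y)

/-- The hyperbolic metric of the unit ball `𝔹ⁿ`, determined by
`sinh²(ρ(x,y)/2) = |x-y|²/((1-|x|²)(1-|y|²))`. -/
noncomputable def hyperDist {n : ℕ} (x y : E n) : ℝ :=
  2 * Real.arsinh (dist x y / Real.sqrt ((1 - ‖x‖ ^ 2) * (1 - ‖y‖ ^ 2)))

section RealAux

lemma wident (u : ℝ) (hu : 0 < u) :
    (u / (1 + u)) ^ 2 / (4 * (1 + u / (1 + u))) = u ^ 2 / (4 * (1 + u) * (1 + 2 * u)) := by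
  have h1 : (0:ℝ) < 1 + u := by linarith
  have h2 : (0:ℝ) < 1 + 2 * u := by linarith
  rw [div_eq_div_iff (by positivity) (by positivity)]
  field_simp
  ring

lemma sinh_half_log_sq (w : ℝ) (hw : 0 < w) :
    Real.sinh (Real.log (1 + w) / 2) ^ 2 = w ^ 2 / (4 * (1 + w)) := by
  have hw1 : (0:ℝ) < 1 + w := by linarith
  have hch : Real.cosh (Real.log (1 + w))
      = 2 * Real.sinh (Real.log (1 + w) / 2) ^ 2 + 1 := by
    rw [show Real.log (1 + w) = 2 * (Real.log (1 + w) / 2) by ring,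
      Real.cosh_two_mul, Real.cosh_sq]
    ring
  have hcl : Real.cosh (Real.log (1 + w)) = ((1 + w) + (1 + w)⁻¹) / 2 :=
    Real.cosh_log hw1
  have h2 : 2 * Real.sinh (Real.log (1 + w) / 2) ^ 2 + 1 = ((1 + w) + (1 + w)⁻¹) / 2 := by
    rw [← hch, hcl]
  rw [eq_div_iff (by positivity : (4 * (1 + w)) ≠ 0)]
  have hc : (1 + w) * (1 + w)⁻¹ = 1 := mul_inv_cancel₀ (by positivity)
  linear_combination 2 * (1 + w) * h2 + hc

lemma key1 {u a b m : ℝ} (hu : 0 < u) (hu1 : u < 1) (ha : 0 < a) (ha1 : a ≤ 1)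
    (hb : 0 < b) (hb1 : b ≤ 1) (hm0 : 0 ≤ m) (h3 : a - m ≤ b)
    (hm_sq : m ^ 2 < u ^ 2 / (4 * (1 + u) * (1 + 2 * u)) * (a * (2 - a) * (b * (2 - b)))) :
    m < u * b := by
  set g : ℝ := (1 + u) * (1 + 2 * u) with hg_def
  have hg1 : 1 ≤ g := by rw [hg_def]; nlinarith only [hu, sq_nonneg u]
  have hg0 : (0:ℝ) < g := by linarith
  have hm_sq' : 4 * g * m ^ 2 < u ^ 2 * (a * (2 - a) * (b * (2 - b))) := by
    have h4g : (0:ℝ) < 4 * g := by linarith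
    rw [show 4 * (1 + u) * (1 + 2 * u) = 4 * g by rw [hg_def]; ring,
      div_mul_eq_mul_div, lt_div_iff₀ h4g] at hm_sq
    linarith only [hm_sq]
  by_contra hcon
  push_neg at hcon
  have hub0 : (0:ℝ) ≤ u * b := by positivity
  have hub2 : u ^ 2 * b ^ 2 ≤ m ^ 2 := by
    have e := mul_le_mul hcon hcon hub0 hm0
    linarith only [e]
  have h5 : (0:ℝ) ≤ 2 * a + 2 * b - a * b := by
    have e := mul_le_mul_of_nonneg_right ha1 hb.le
    linarith only [e, ha, hb]
  have hq : (0:ℝ) ≤ u ^ 2 * (a * b) * (2 * a + 2 * b - a * b) :=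
    mul_nonneg (mul_nonneg (sq_nonneg u) (mul_pos ha hb).le) h5
  have hstep : 4 * g * m ^ 2 < 4 * u ^ 2 * (a * b) := by linarith only [hq, hm_sq']
  have h4g0 : (0:ℝ) ≤ 4 * g := by linarith
  have hub2' := mul_le_mul_of_nonneg_left hub2 h4g0
  have hgb2 : g * b ^ 2 < a * b := by
    nlinarith only [hstep, hub2', mul_pos hu hu]
  have h1 : g * b < a := by nlinarith only [hgb2, hb]
  have hgm : g ^ 2 * m ^ 2 < u ^ 2 * a ^ 2 := by
    have e1 := mul_lt_mul_of_pos_left hstep hg0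
    have e2 := mul_lt_mul_of_pos_left h1 (show (0:ℝ) < 4 * u ^ 2 * a by positivity)
    linarith only [e1, e2]
  have h2 : g * m < u * a := by
    have e5 : (0:ℝ) < u * a := mul_pos hu ha
    have e6 : (0:ℝ) ≤ g * m := mul_nonneg hg0.le hm0
    by_contra hcc
    push_neg at hcc
    have e7 := mul_le_mul hcc hcc e5.le e6
    linarith only [hgm, e7]
  have e7 := mul_le_mul_of_nonneg_left h3 hg0.le
  have e8 : (0:ℝ) ≤ a * (g - u - 1) :=
    mul_nonneg ha.le (show (0:ℝ) ≤ g - u - 1 by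
      rw [hg_def]; nlinarith only [hu, sq_nonneg u])
  linarith only [h1, h2, e7, e8]

lemma key2 {u a b m : ℝ} (hu : 0 < u) (hu1 : u < 1) (ha : 0 < a) (ha1 : a ≤ 1)
    (hb : 0 < b) (hb1 : b ≤ 1) (hm0 : 0 ≤ m)
    (hi : m * (1 - u) < u * a) (hii : m * a < u * (b * (m + b))) :
    m ^ 2 * (1 - u) ^ 2 < u ^ 2 * (a * b) := by
  rcases le_or_gt a b with hab | hab
  · have e2 : (0:ℝ) ≤ m * (1 - u) := mul_nonneg hm0 (by linarith)
    have h1' : m ^ 2 * (1 - u) ^ 2 < u ^ 2 * a ^ 2 := by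
      have e3 := mul_self_lt_mul_self e2 hi
      linarith only [e3]
    have h2' : (0:ℝ) ≤ u ^ 2 * (a * b - a ^ 2) :=
      mul_nonneg (sq_nonneg u) (by
        have e4 := mul_le_mul_of_nonneg_left hab ha.le
        linarith only [e4])
    linarith only [h1', h2']
  · have hsub : m * (a - u * b) < u * b ^ 2 := by linarith only [hii]
    have hpos : a * (1 - u) ≤ a - u * b := by
      have e1 := mul_le_mul_of_nonneg_left hab.le hu.le
      linarith only [e1]
    have h2' : m * (a * (1 - u)) < u * b ^ 2 := by
      calc m * (a * (1 - u)) ≤ m * (a - u * b) := mul_le_mul_of_nonneg_left hpos hm0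
        _ < u * b ^ 2 := hsub
    have hres : (m * (1 - u)) * (m * (a * (1 - u))) ≤ (u * a) * (u * b ^ 2) := by
      apply mul_le_mul hi.le h2'.le
      · exact mul_nonneg hm0 (mul_nonneg ha.le (by linarith))
      · positivity
    have hb2 : a * (m ^ 2 * (1 - u) ^ 2) ≤ a * (u ^ 2 * b ^ 2) := by linarith only [hres]
    have hb2' : m ^ 2 * (1 - u) ^ 2 ≤ u ^ 2 * b ^ 2 := le_of_mul_le_mul_left hb2 ha
    have hlast : u ^ 2 * b ^ 2 < u ^ 2 * (a * b) := by
      have e1 : (0:ℝ) < u ^ 2 * b * (a - b) :=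
        mul_pos (mul_pos (by positivity) hb) (by linarith)
      linarith only [e1]
    linarith only [hb2', hlast]

end RealAux

section Aux

variable {n : ℕ}

lemma cass_term_bound {x y : E n} (hx : ‖x‖ < 1) (hy : ‖y‖ < 1) {p : E n}
    (hp : p ∈ sphere (0 : E n) 1) :
    dist x y / (dist x p * dist p y) ≤ dist x y / ((1 - ‖x‖) * (1 - ‖y‖)) := by
  have hpn : ‖p‖ = 1 := by simpa using hp
  have h1 : 1 - ‖x‖ ≤ dist x p := by
    have := norm_sub_norm_le p x
    rw [hpn] at this
    rw [dist_eq_norm, norm_sub_rev]; linarith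
  have h2 : 1 - ‖y‖ ≤ dist p y := by
    have := norm_sub_norm_le p y
    rw [hpn] at this
    rw [dist_eq_norm]; linarith
  have hxp : (0:ℝ) < 1 - ‖x‖ := by linarith
  have hyp : (0:ℝ) < 1 - ‖y‖ := by linarith
  have hdp : (0:ℝ) < dist x p * dist p y :=
    mul_pos (lt_of_lt_of_le hxp h1) (lt_of_lt_of_le hyp h2)
  have hd : (1 - ‖x‖) * (1 - ‖y‖) ≤ dist x p * dist p y :=
    mul_le_mul h1 h2 hyp.le (le_trans hxp.le h1)
  rw [div_le_div_iff₀ hdp (by positivity)]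
  exact mul_le_mul_of_nonneg_left hd dist_nonneg

lemma cass_le {x y : E n} (hx : ‖x‖ < 1) (hy : ‖y‖ < 1) :
    cassinian (ball (0 : E n) 1) x y ≤ dist x y / ((1 - ‖x‖) * (1 - ‖y‖)) := by
  have hxp : (0:ℝ) < 1 - ‖x‖ := by linarith
  have hyp : (0:ℝ) < 1 - ‖y‖ := by linarith
  have hM : (0:ℝ) ≤ dist x y / ((1 - ‖x‖) * (1 - ‖y‖)) := by positivity
  rw [cassinian, frontier_ball (0 : E n) one_ne_zero]
  refine Real.iSup_le (fun p => Real.iSup_le (fun hp => ?_) hM) hM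
  exact cass_term_bound hx hy hp

lemma le_cass {x y : E n} (hx : ‖x‖ < 1) (hy : ‖y‖ < 1) {p : E n}
    (hp : p ∈ sphere (0 : E n) 1) :
    dist x y / (dist x p * dist p y) ≤ cassinian (ball (0 : E n) 1) x y := by
  have hxp : (0:ℝ) < 1 - ‖x‖ := by linarith
  have hyp : (0:ℝ) < 1 - ‖y‖ := by linarith
  have hM : (0:ℝ) ≤ dist x y / ((1 - ‖x‖) * (1 - ‖y‖)) := by positivity
  rw [cassinian, frontier_ball (0 : E n) one_ne_zero]
  have hbdd : BddAbove (range fun q : E n =>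
      ⨆ _ : q ∈ sphere (0 : E n) 1, dist x y / (dist x q * dist q y)) := by
    refine ⟨dist x y / ((1 - ‖x‖) * (1 - ‖y‖)), ?_⟩
    rintro _ ⟨q, rfl⟩
    dsimp only
    by_cases hq : q ∈ sphere (0 : E n) 1
    · rw [ciSup_pos (f := fun _ : q ∈ sphere (0 : E n) 1 =>
        dist x y / (dist x q * dist q y)) hq]
      exact cass_term_bound hx hy hq
    · haveI : IsEmpty (q ∈ sphere (0 : E n) 1) := ⟨hq⟩
      rw [Real.iSup_of_isEmpty]; exact hM
  calc dist x y / (dist x p * dist p y)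
      = ⨆ _ : p ∈ sphere (0 : E n) 1, dist x y / (dist x p * dist p y) :=
        (ciSup_pos (f := fun _ : p ∈ sphere (0 : E n) 1 =>
          dist x y / (dist x p * dist p y)) hp).symm
    _ ≤ _ := le_ciSup hbdd p

lemma exists_nearest (hn : 2 ≤ n) {x : E n} (hx : ‖x‖ < 1) :
    ∃ p : E n, p ∈ sphere (0 : E n) 1 ∧ dist x p = 1 - ‖x‖ := by
  haveI : Nonempty (Fin n) := ⟨⟨0, by omega⟩⟩
  rcases eq_or_ne x 0 with rfl | hx0
  · refine ⟨EuclideanSpace.single (Classical.arbitrary (Fin n)) (1:ℝ), ?_, ?_⟩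
    · simp [EuclideanSpace.norm_single]
    · simp [dist_eq_norm, EuclideanSpace.norm_single]
  · have hxn : 0 < ‖x‖ := norm_pos_iff.mpr hx0
    refine ⟨‖x‖⁻¹ • x, ?_, ?_⟩
    · simp only [mem_sphere_zero_iff_norm, norm_smul, norm_inv, Real.norm_eq_abs,
        abs_of_nonneg (norm_nonneg x)]
      field_simp
    · have h1 : x - ‖x‖⁻¹ • x = (1 - ‖x‖⁻¹) • x := by
        rw [sub_smul, one_smul]
      rw [dist_eq_norm, h1, norm_smul, Real.norm_eq_abs]
      have hinv : 1 ≤ ‖x‖⁻¹ := (one_le_inv₀ hxn).2 hx.le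
      rw [abs_of_nonpos (by linarith)]
      field_simp
      ring

end Aux

/-- **Inclusion of Cassinian balls of the unit ball between hyperbolic balls.**
Let `x ∈ 𝔹ⁿ`, `t > 0` with `t(1-|x|) < 1`.  Then `B_ρ(x,r) ⊆ B_c(x,t) ⊆ B_ρ(x,R)` with
`r = log(1 + t(1-|x|)/(1+t(1-|x|)))` and `R = 2t(1-|x|)/(1-t(1-|x|))`. -/
theorem hyperbolicBall_subset_cassinianBall_subset (n : ℕ) (hn : 2 ≤ n)
    (x : E n) (hx : x ∈ ball (0 : E n) 1) (t : ℝ) (ht : 0 < t)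
    (ht1 : t * (1 - ‖x‖) < 1) :
    {y ∈ ball (0 : E n) 1 |
          hyperDist x y < Real.log (1 + t * (1 - ‖x‖) / (1 + t * (1 - ‖x‖)))}
        ⊆ {y ∈ ball (0 : E n) 1 | cassinian (ball (0 : E n) 1) x y < t} ∧
      {y ∈ ball (0 : E n) 1 | cassinian (ball (0 : E n) 1) x y < t}
        ⊆ {y ∈ ball (0 : E n) 1 |
          hyperDist x y < 2 * t * (1 - ‖x‖) / (1 - t * (1 - ‖x‖))} := by
  rw [mem_ball_zero_iff] at hx
  have hx0 := norm_nonneg x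
  set a : ℝ := 1 - ‖x‖ with ha_def
  have ha : 0 < a := by rw [ha_def]; linarith
  have ha1 : a ≤ 1 := by rw [ha_def]; linarith
  set u : ℝ := t * a with hu_def
  have hu : 0 < u := by positivity
  have hu1 : u < 1 := ht1
  constructor
  · -- first inclusion
    rintro y ⟨hy, hρ⟩
    rw [mem_ball_zero_iff] at hy
    refine ⟨mem_ball_zero_iff.mpr hy, ?_⟩
    have hy0 := norm_nonneg y
    set b : ℝ := 1 - ‖y‖ with hb_def
    have hb : 0 < b := by rw [hb_def]; linarith
    have hb1 : b ≤ 1 := by rw [hb_def]; linarith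
    set m : ℝ := dist x y with hm_def
    have hm0 : 0 ≤ m := dist_nonneg
    set w : ℝ := u / (1 + u) with hw_def
    have hw : 0 < w := div_pos hu (by linarith)
    have hA : (1 - ‖x‖ ^ 2) = a * (2 - a) := by rw [ha_def]; ring
    have hB : (1 - ‖y‖ ^ 2) = b * (2 - b) := by rw [hb_def]; ring
    have hABpos : 0 < (1 - ‖x‖ ^ 2) * (1 - ‖y‖ ^ 2) := by
      rw [hA, hB]
      exact mul_pos (mul_pos ha (by linarith)) (mul_pos hb (by linarith))
    have hsq : 0 < Real.sqrt ((1 - ‖x‖ ^ 2) * (1 - ‖y‖ ^ 2)) := Real.sqrt_pos.mpr hABpos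
    set s : ℝ := m / Real.sqrt ((1 - ‖x‖ ^ 2) * (1 - ‖y‖ ^ 2)) with hs_def
    have hs0 : 0 ≤ s := div_nonneg hm0 hsq.le
    have hρ' : 2 * Real.arsinh s < Real.log (1 + w) := hρ
    have harc : Real.arsinh s < Real.log (1 + w) / 2 := by linarith
    have hlt : s < Real.sinh (Real.log (1 + w) / 2) := by
      have := Real.sinh_lt_sinh.mpr harc
      rwa [Real.sinh_arsinh] at this
    have hσsq : (Real.sinh (Real.log (1 + w) / 2)) ^ 2
        = u ^ 2 / (4 * (1 + u) * (1 + 2 * u)) := by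
      rw [sinh_half_log_sq w hw, hw_def]
      exact wident u hu
    have hm_sq : m ^ 2 < u ^ 2 / (4 * (1 + u) * (1 + 2 * u)) * (a * (2 - a) * (b * (2 - b))) := by
      have hs_sq : s ^ 2 < u ^ 2 / (4 * (1 + u) * (1 + 2 * u)) := by
        calc s ^ 2 < (Real.sinh (Real.log (1 + w) / 2)) ^ 2 := by
              apply sq_lt_sq' _ hlt; linarith
          _ = u ^ 2 / (4 * (1 + u) * (1 + 2 * u)) := hσsq
      have hms : m = s * Real.sqrt ((1 - ‖x‖ ^ 2) * (1 - ‖y‖ ^ 2)) :=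
        (div_mul_cancel₀ m hsq.ne').symm
      calc m ^ 2 = s ^ 2 * ((1 - ‖x‖ ^ 2) * (1 - ‖y‖ ^ 2)) := by
            rw [hms, mul_pow, Real.sq_sqrt hABpos.le]
        _ < u ^ 2 / (4 * (1 + u) * (1 + 2 * u)) * ((1 - ‖x‖ ^ 2) * (1 - ‖y‖ ^ 2)) :=
            mul_lt_mul_of_pos_right hs_sq hABpos
        _ = u ^ 2 / (4 * (1 + u) * (1 + 2 * u)) * (a * (2 - a) * (b * (2 - b))) := by
            rw [hA, hB]
    have h3 : a - m ≤ b := by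
      have h4 : ‖y‖ ≤ ‖x‖ + m := by
        have := norm_sub_norm_le y x
        rw [← dist_eq_norm, dist_comm] at this; linarith
      rw [ha_def, hb_def]; linarith
    have hkey : m < u * b := key1 hu hu1 ha ha1 hb hb1 hm0 h3 hm_sq
    calc cassinian (ball (0 : E n) 1) x y ≤ m / (a * b) := cass_le hx hy
      _ < t := by
        rw [div_lt_iff₀ (by positivity)]
        calc m < u * b := hkey
          _ = t * (a * b) := by rw [hu_def]; ring
  · -- second inclusion
    rintro y ⟨hy, hc⟩
    rw [mem_ball_zero_iff] at hy
    refine ⟨mem_ball_zero_iff.mpr hy, ?_⟩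
    have hy0 := norm_nonneg y
    set b : ℝ := 1 - ‖y‖ with hb_def
    have hb : 0 < b := by rw [hb_def]; linarith
    have hb1 : b ≤ 1 := by rw [hb_def]; linarith
    set m : ℝ := dist x y with hm_def
    have hm0 : 0 ≤ m := dist_nonneg
    obtain ⟨p₀, hp₀s, hp₀d⟩ := exists_nearest hn hx
    obtain ⟨p₁, hp₁s, hp₁d⟩ := exists_nearest hn hy
    have hbp₀ : b ≤ dist p₀ y := by
      have hpn : ‖p₀‖ = 1 := by simpa using hp₀s
      have := norm_sub_norm_le p₀ y
      rw [hpn] at this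
      rw [hb_def, dist_eq_norm]; linarith
    have hap₁ : a ≤ dist x p₁ := by
      have hpn : ‖p₁‖ = 1 := by simpa using hp₁s
      have := norm_sub_norm_le p₁ x
      rw [hpn] at this
      rw [ha_def, dist_eq_norm, norm_sub_rev]; linarith
    have h0 : m / (a * dist p₀ y) < t := by
      have h := le_cass hx hy (p := p₀) hp₀s
      rw [hp₀d, ← ha_def, ← hm_def] at h
      exact lt_of_le_of_lt h hc
    have h1 : m / (dist x p₁ * b) < t := by
      have h := le_cass hx hy (p := p₁) hp₁s
      rw [dist_comm p₁ y, hp₁d, ← hb_def, ← hm_def] at h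
      exact lt_of_le_of_lt h hc
    have hd0 : 0 < dist p₀ y := lt_of_lt_of_le hb hbp₀
    have hd1 : 0 < dist x p₁ := lt_of_lt_of_le ha hap₁
    have htri0 : dist p₀ y ≤ a + m := by
      calc dist p₀ y ≤ dist p₀ x + dist x y := dist_triangle _ _ _
        _ = a + m := by rw [dist_comm p₀ x, hp₀d, ← ha_def, ← hm_def]
    have htri1 : dist x p₁ ≤ m + b := by
      calc dist x p₁ ≤ dist x y + dist y p₁ := dist_triangle _ _ _
        _ = m + b := by rw [hp₁d, ← hb_def, ← hm_def]
    have hi : m * (1 - u) < u * a := by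
      rw [div_lt_iff₀ (by positivity)] at h0
      have e1 := mul_le_mul_of_nonneg_left htri0 (show (0:ℝ) ≤ t * a by positivity)
      have e2 : t * a * m = u * m := by rw [hu_def]
      have e5 : t * a * a = u * a := by rw [hu_def]
      linarith only [h0, e1, e2, e5]
    have hii : m * a < u * (b * (m + b)) := by
      rw [div_lt_iff₀ (by positivity)] at h1
      have e2s := mul_lt_mul_of_pos_left h1 ha
      have e3 := mul_le_mul_of_nonneg_left
        (mul_le_mul_of_nonneg_left htri1 (show (0:ℝ) ≤ t * b by positivity)) ha.le
      have e4 : u * (b * (m + b)) = t * a * (b * (m + b)) := by rw [hu_def]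
      linarith only [e2s, e3, e4]
    have hmsq : m ^ 2 * (1 - u) ^ 2 < u ^ 2 * (a * b) :=
      key2 hu hu1 ha ha1 hb hb1 hm0 hi hii
    have hA : (1 - ‖x‖ ^ 2) = a * (2 - a) := by rw [ha_def]; ring
    have hB : (1 - ‖y‖ ^ 2) = b * (2 - b) := by rw [hb_def]; ring
    have hABpos : 0 < (1 - ‖x‖ ^ 2) * (1 - ‖y‖ ^ 2) := by
      rw [hA, hB]
      exact mul_pos (mul_pos ha (by linarith)) (mul_pos hb (by linarith))
    have hab_le : a * b ≤ (1 - ‖x‖ ^ 2) * (1 - ‖y‖ ^ 2) := by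
      rw [hA, hB]
      have h21 : (1:ℝ) ≤ (2 - a) * (2 - b) := by
        have e := mul_nonneg (show (0:ℝ) ≤ 1 - a by linarith)
          (show (0:ℝ) ≤ 1 - b by linarith)
        linarith only [e, ha1, hb1]
      have e2 := mul_le_mul_of_nonneg_left h21 (mul_pos ha hb).le
      linarith only [e2]
    have hsq : 0 < Real.sqrt ((1 - ‖x‖ ^ 2) * (1 - ‖y‖ ^ 2)) := Real.sqrt_pos.mpr hABpos
    set s : ℝ := m / Real.sqrt ((1 - ‖x‖ ^ 2) * (1 - ‖y‖ ^ 2)) with hs_def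
    have hs0 : 0 ≤ s := div_nonneg hm0 hsq.le
    set v : ℝ := u / (1 - u) with hv_def
    have hv : 0 < v := div_pos hu (by linarith)
    have hsv : s < v := by
      have hsqrt : Real.sqrt ((1 - ‖x‖ ^ 2) * (1 - ‖y‖ ^ 2)) ^ 2
          = (1 - ‖x‖ ^ 2) * (1 - ‖y‖ ^ 2) := Real.sq_sqrt hABpos.le
      have hs_sq : s ^ 2 = m ^ 2 / ((1 - ‖x‖ ^ 2) * (1 - ‖y‖ ^ 2)) := by
        rw [hs_def, div_pow, hsqrt]
      have hsq2 : s ^ 2 < v ^ 2 := by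
        rw [hs_sq, hv_def, div_pow, div_lt_div_iff₀ hABpos (pow_pos (show (0:ℝ) < 1 - u by linarith) 2)]
        calc m ^ 2 * (1 - u) ^ 2 < u ^ 2 * (a * b) := hmsq
          _ ≤ u ^ 2 * ((1 - ‖x‖ ^ 2) * (1 - ‖y‖ ^ 2)) :=
              mul_le_mul_of_nonneg_left hab_le (sq_nonneg u)
      by_contra hcc
      push_neg at hcc
      have e := mul_le_mul hcc hcc hv.le hs0
      linarith only [hsq2, e]
    have hfinal : Real.arsinh s < v := by
      have hsv2 : s < Real.sinh v := lt_of_lt_of_le hsv (Real.self_le_sinh_iff.mpr hv.le)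
      have := Real.arsinh_lt_arsinh.mpr hsv2
      rwa [Real.arsinh_sinh] at this
    show 2 * Real.arsinh s < 2 * t * (1 - ‖x‖) / (1 - t * (1 - ‖x‖))
    have hR : 2 * t * (1 - ‖x‖) / (1 - t * (1 - ‖x‖)) = 2 * v := by
      rw [hv_def, hu_def, ha_def]
      ring
    rw [hR]; linarith
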